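/- Let I, J, K be open intervals, let E, F, G be normalizable semideviations on I, J, K respectively, and let f : J × K → I be a differentiable function. Then the following are equivalent: (i) for every choice of M among the four means LLD_F, LD_F, UD_F, UUD_F and N among LLD_G, LD_G, UD_G, UUD_G, and for all n ∈ ℕ, x ∈ Jⁿ, y ∈ Kⁿ and weight vectors λ, LLD_E(f(x,y),λ) ≤ f(M(x,λ), N(y,λ)), where f(x,y) := (f(x₁,y₁),…,f(xₙ,yₙ)); (ii) there exist such a choice of M and N for which this inequality holds for all n, x, y, λ; (iii) for all p, u ∈ J and q, v ∈ K, E*(f(p,q), f(u,v)) ≤ ∂₁f(u,v)·F*(p,u) + ∂₂f(u,v)·G*(q,v). -/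

import Mathlib

open Set Filter Topology

/-- The weighted sum `e(y) = λ₁E(x₁,y)+⋯+λₙE(xₙ,y)`. -/
noncomputable def eFun (E : ℝ → ℝ → ℝ) {n : ℕ} (x lam : Fin n → ℝ) (y : ℝ) : ℝ :=
  ∑ i, lam i * E (x i) y

/-- Lower semideviation mean `LLD_E(x,λ) = inf {y ∈ I : e(y) ≤ 0}`. -/
noncomputable def LLD (I : Set ℝ) (E : ℝ → ℝ → ℝ) {n : ℕ} (x lam : Fin n → ℝ) : ℝ :=
  sInf {y : ℝ | y ∈ I ∧ eFun E x lam y ≤ 0}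

/-- Upper semideviation mean `UUD_E(x,λ) = sup {y ∈ I : e(y) ≥ 0}`. -/
noncomputable def UUD (I : Set ℝ) (E : ℝ → ℝ → ℝ) {n : ℕ} (x lam : Fin n → ℝ) : ℝ :=
  sSup {y : ℝ | y ∈ I ∧ 0 ≤ eFun E x lam y}

/-- `LD_E(x,λ) = inf {y ∈ I : e(y) < 0}`. -/
noncomputable def LD (I : Set ℝ) (E : ℝ → ℝ → ℝ) {n : ℕ} (x lam : Fin n → ℝ) : ℝ :=
  sInf {y : ℝ | y ∈ I ∧ eFun E x lam y < 0}

/-- `UD_E(x,λ) = sup {y ∈ I : e(y) > 0}`. -/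
noncomputable def UD (I : Set ℝ) (E : ℝ → ℝ → ℝ) {n : ℕ} (x lam : Fin n → ℝ) : ℝ :=
  sSup {y : ℝ | y ∈ I ∧ 0 < eFun E x lam y}

/-- A weight vector: nonnegative entries with positive sum. -/
def IsWeight {n : ℕ} (lam : Fin n → ℝ) : Prop :=
  (∀ i, 0 ≤ lam i) ∧ 0 < ∑ i, lam i

/-- `E` is a semideviation on `I`: for distinct `x, y ∈ I` the sign of `E x y`
coincides with the sign of `x - y`. -/
def IsSemideviation (I : Set ℝ) (E : ℝ → ℝ → ℝ) : Prop :=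
  ∀ x ∈ I, ∀ y ∈ I, x ≠ y → Real.sign (E x y) = Real.sign (x - y)

/-- `E` is a normalizable semideviation on `I`, with `d x = ∂₂E(x,x)`. -/
def IsNormalizable (I : Set ℝ) (E : ℝ → ℝ → ℝ) (d : ℝ → ℝ) : Prop :=
  IsSemideviation I E ∧
  (∀ x ∈ I, ContinuousOn (fun y => E x y) I) ∧
  (∀ x ∈ I, HasDerivWithinAt (fun y => E x y) (d x) I x) ∧
  (∀ x ∈ I, d x < 0) ∧
  ContinuousOn d I

/-- The normalization `E*(x,y) = E(x,y)/(-∂₂E(y,y))`. -/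
noncomputable def nrm (E : ℝ → ℝ → ℝ) (d : ℝ → ℝ) (x y : ℝ) : ℝ :=
  E x y / (-(d y))

/-- Selector among the four semideviation means: `0 ↦ LLD`, `1 ↦ LD`, `2 ↦ UD`,
`3 ↦ UUD`. -/
noncomputable def meanOf (k : Fin 4) (I : Set ℝ) (E : ℝ → ℝ → ℝ) {n : ℕ}
    (x lam : Fin n → ℝ) : ℝ :=
  if k = 0 then LLD I E x lam
  else if k = 1 then LD I E x lam
  else if k = 2 then UD I E x lam
  else UUD I E x lam

/-- Theorem: characterization of Hölder–Minkowski type inequalities for semideviation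
means under a differentiable operation `f : J × K → I` with partial derivatives
`f₁, f₂`. -/
lemma sd_pos {I : Set ℝ} {E : ℝ → ℝ → ℝ} (hE : IsSemideviation I E)
    {x y : ℝ} (hx : x ∈ I) (hy : y ∈ I) (h : y < x) : 0 < E x y := by
  have hs := hE x hx y hy (ne_of_gt h)
  rw [Real.sign_of_pos (by linarith : (0:ℝ) < x - y)] at hs
  rcases lt_trichotomy (E x y) 0 with h' | h' | h'
  · rw [Real.sign_of_neg h'] at hs; norm_num at hs
  · rw [h', Real.sign_zero] at hs; norm_num at hs
  · exact h'

lemma sd_neg {I : Set ℝ} {E : ℝ → ℝ → ℝ} (hE : IsSemideviation I E)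
    {x y : ℝ} (hx : x ∈ I) (hy : y ∈ I) (h : x < y) : E x y < 0 := by
  have hs := hE x hx y hy (ne_of_lt h)
  rw [Real.sign_of_neg (by linarith : x - y < (0:ℝ))] at hs
  rcases lt_trichotomy (E x y) 0 with h' | h' | h'
  · exact h'
  · rw [h', Real.sign_zero] at hs; norm_num at hs
  · rw [Real.sign_of_pos h'] at hs; norm_num at hs

lemma sd_ne {I : Set ℝ} {E : ℝ → ℝ → ℝ} (hE : IsSemideviation I E)
    {x y : ℝ} (hx : x ∈ I) (hy : y ∈ I) (h : x ≠ y) : E x y ≠ 0 := by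
  rcases h.lt_or_gt with h' | h'
  · exact ne_of_lt (sd_neg hE hx hy h')
  · exact ne_of_gt (sd_pos hE hx hy h')

lemma sd_diag {I : Set ℝ} {E : ℝ → ℝ → ℝ} (hIo : IsOpen I) (hE : IsSemideviation I E)
    (hc : ∀ x ∈ I, ContinuousOn (fun y => E x y) I) {x : ℝ} (hx : x ∈ I) : E x x = 0 := by
  have hI : I ∈ 𝓝 x := hIo.mem_nhds hx
  have hct : ContinuousAt (fun y => E x y) x := (hc x hx).continuousAt hI
  have h1 : 0 ≤ E x x := by
    refine ge_of_tendsto (hct.tendsto.mono_left nhdsWithin_le_nhds :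
      Tendsto (fun y => E x y) (𝓝[<] x) (𝓝 (E x x))) ?_
    filter_upwards [inter_mem_nhdsWithin (Iio x) hI] with y hy
    exact le_of_lt (sd_pos hE hx hy.2 hy.1)
  have h2 : E x x ≤ 0 := by
    refine le_of_tendsto (hct.tendsto.mono_left nhdsWithin_le_nhds :
      Tendsto (fun y => E x y) (𝓝[>] x) (𝓝 (E x x))) ?_
    filter_upwards [inter_mem_nhdsWithin (Ioi x) hI] with y hy
    exact le_of_lt (sd_neg hE hx hy.2 hy.1)
  linarith
lemma weight_support {n : ℕ} {lam : Fin n → ℝ} (h : IsWeight lam) : ∃ i, lam i ≠ 0 := by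
  by_contra hc
  push_neg at hc
  have : ∑ i, lam i = 0 := Finset.sum_eq_zero fun i _ => hc i
  linarith [h.2]

lemma eFun_continuousOn {I : Set ℝ} {E : ℝ → ℝ → ℝ}
    (hc : ∀ x ∈ I, ContinuousOn (fun y => E x y) I) {n : ℕ} {x : Fin n → ℝ}
    (lam : Fin n → ℝ) (hx : ∀ i, x i ∈ I) : ContinuousOn (eFun E x lam) I := by
  have : ContinuousOn (fun y => ∑ i, lam i * E (x i) y) I :=
    continuousOn_finset_sum _ fun i _ => (continuousOn_const.mul (hc (x i) (hx i)))
  exact this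

lemma eFun_pos {I : Set ℝ} {E : ℝ → ℝ → ℝ} (hE : IsSemideviation I E)
    {n : ℕ} {x lam : Fin n → ℝ} (hx : ∀ i, x i ∈ I) (hw : IsWeight lam)
    {y : ℝ} (hy : y ∈ I) (h : ∀ i, lam i ≠ 0 → y < x i) : 0 < eFun E x lam y := by
  obtain ⟨j, hj⟩ := weight_support hw
  refine Finset.sum_pos' (fun i _ => ?_) ⟨j, Finset.mem_univ j, ?_⟩
  · rcases eq_or_ne (lam i) 0 with h' | h'
    · simp [h']
    · exact le_of_lt (mul_pos ((hw.1 i).lt_of_ne (Ne.symm h')) (sd_pos hE (hx i) hy (h i h')))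
  · exact mul_pos ((hw.1 j).lt_of_ne (Ne.symm hj)) (sd_pos hE (hx j) hy (h j hj))

lemma eFun_neg {I : Set ℝ} {E : ℝ → ℝ → ℝ} (hE : IsSemideviation I E)
    {n : ℕ} {x lam : Fin n → ℝ} (hx : ∀ i, x i ∈ I) (hw : IsWeight lam)
    {y : ℝ} (hy : y ∈ I) (h : ∀ i, lam i ≠ 0 → x i < y) : eFun E x lam y < 0 := by
  obtain ⟨j, hj⟩ := weight_support hw
  have : 0 < ∑ i, lam i * (- E (x i) y) := by
    refine Finset.sum_pos' (fun i _ => ?_) ⟨j, Finset.mem_univ j, ?_⟩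
    · rcases eq_or_ne (lam i) 0 with h' | h'
      · simp [h']
      · exact le_of_lt (mul_pos ((hw.1 i).lt_of_ne (Ne.symm h'))
          (by linarith [sd_neg hE (hx i) hy (h i h')]))
    · exact mul_pos ((hw.1 j).lt_of_ne (Ne.symm hj))
        (by linarith [sd_neg hE (hx j) hy (h j hj)])
  have h2 : ∑ i, lam i * (- E (x i) y) = - eFun E x lam y := by
    simp [eFun, ← Finset.sum_neg_distrib, mul_neg]
  rw [h2] at this; linarith

lemma eFun_nonneg {I : Set ℝ} {E : ℝ → ℝ → ℝ} (hIo : IsOpen I) (hE : IsSemideviation I E)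
    (hc : ∀ x ∈ I, ContinuousOn (fun y => E x y) I)
    {n : ℕ} {x lam : Fin n → ℝ} (hx : ∀ i, x i ∈ I) (hw : IsWeight lam)
    {y : ℝ} (hy : y ∈ I) (h : ∀ i, lam i ≠ 0 → y ≤ x i) : 0 ≤ eFun E x lam y := by
  refine Finset.sum_nonneg fun i _ => ?_
  rcases eq_or_ne (lam i) 0 with h' | h'
  · simp [h']
  · rcases eq_or_lt_of_le (h i h') with h2 | h2
    · rw [← h2, sd_diag hIo hE hc hy, mul_zero]
    · exact le_of_lt (mul_pos ((hw.1 i).lt_of_ne (Ne.symm h')) (sd_pos hE (hx i) hy h2))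

lemma eFun_nonpos {I : Set ℝ} {E : ℝ → ℝ → ℝ} (hIo : IsOpen I) (hE : IsSemideviation I E)
    (hc : ∀ x ∈ I, ContinuousOn (fun y => E x y) I)
    {n : ℕ} {x lam : Fin n → ℝ} (hx : ∀ i, x i ∈ I) (hw : IsWeight lam)
    {y : ℝ} (hy : y ∈ I) (h : ∀ i, lam i ≠ 0 → x i ≤ y) : eFun E x lam y ≤ 0 := by
  refine Finset.sum_nonpos fun i _ => ?_
  rcases eq_or_ne (lam i) 0 with h' | h'
  · simp [h']
  · rcases eq_or_lt_of_le (h i h') with h2 | h2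
    · rw [h2, sd_diag hIo hE hc hy, mul_zero]
    · exact mul_nonpos_of_nonneg_of_nonpos (hw.1 i) (le_of_lt (sd_neg hE (hx i) hy h2))
lemma cont_le_closure {g : ℝ → ℝ} {S : Set ℝ} {a : ℝ} (hg : ContinuousAt g a)
    (ha : a ∈ closure S) (h : ∀ y ∈ S, g y ≤ 0) : g a ≤ 0 := by
  have : (𝓝[S] a).NeBot := mem_closure_iff_nhdsWithin_neBot.mp ha
  exact le_of_tendsto hg.continuousWithinAt.tendsto (eventually_nhdsWithin_of_forall h)

lemma cont_ge_closure {g : ℝ → ℝ} {S : Set ℝ} {a : ℝ} (hg : ContinuousAt g a)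
    (ha : a ∈ closure S) (h : ∀ y ∈ S, 0 ≤ g y) : 0 ≤ g a := by
  have : (𝓝[S] a).NeBot := mem_closure_iff_nhdsWithin_neBot.mp ha
  exact ge_of_tendsto hg.continuousWithinAt.tendsto (eventually_nhdsWithin_of_forall h)

lemma cont_nonneg_left {g : ℝ → ℝ} {I : Set ℝ} {a : ℝ} (hg : ContinuousAt g a)
    (hI : I ∈ 𝓝 a) (h : ∀ y ∈ I, y < a → 0 ≤ g y) : 0 ≤ g a := by
  refine ge_of_tendsto (hg.tendsto.mono_left (nhdsWithin_le_nhds : 𝓝[<] a ≤ 𝓝 a)) ?_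
  filter_upwards [inter_mem_nhdsWithin (Iio a) hI] with y hy
  exact h y hy.2 hy.1

lemma cont_nonpos_right {g : ℝ → ℝ} {I : Set ℝ} {a : ℝ} (hg : ContinuousAt g a)
    (hI : I ∈ 𝓝 a) (h : ∀ y ∈ I, a < y → g y ≤ 0) : g a ≤ 0 := by
  refine le_of_tendsto (hg.tendsto.mono_left (nhdsWithin_le_nhds : 𝓝[>] a ≤ 𝓝 a)) ?_
  filter_upwards [inter_mem_nhdsWithin (Ioi a) hI] with y hy
  exact h y hy.2 hy.1

lemma exists_right {I : Set ℝ} (hIo : IsOpen I) {M : ℝ} (hM : M ∈ I) {ε : ℝ} (hε : 0 < ε) :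
    ∃ y, y ∈ I ∧ M < y ∧ y < M + ε := by
  obtain ⟨r, hr, hball⟩ := Metric.isOpen_iff.mp hIo M hM
  have hmin : 0 < min r ε := lt_min hr hε
  refine ⟨M + min r ε / 2, hball ?_, by linarith, by linarith [min_le_right r ε]⟩
  rw [Metric.mem_ball, Real.dist_eq]
  rw [abs_of_nonneg (by linarith : (0:ℝ) ≤ M + min r ε / 2 - M)]
  linarith [min_le_left r ε]

lemma exists_left {I : Set ℝ} (hIo : IsOpen I) {m : ℝ} (hM : m ∈ I) {ε : ℝ} (hε : 0 < ε) :
    ∃ y, y ∈ I ∧ y < m ∧ m - ε < y := by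
  obtain ⟨r, hr, hball⟩ := Metric.isOpen_iff.mp hIo m hM
  have hmin : 0 < min r ε := lt_min hr hε
  refine ⟨m - min r ε / 2, hball ?_, by linarith, by linarith [min_le_right r ε]⟩
  rw [Metric.mem_ball, Real.dist_eq]
  rw [abs_of_nonpos (by linarith : m - min r ε / 2 - m ≤ (0:ℝ))]
  linarith [min_le_left r ε]
lemma mean_props {I : Set ℝ} {E : ℝ → ℝ → ℝ} {dE : ℝ → ℝ}
    (hI : I.OrdConnected) (hIo : IsOpen I) (hE : IsNormalizable I E dE)
    {n : ℕ} {x lam : Fin n → ℝ} (hx : ∀ i, x i ∈ I) (hw : IsWeight lam) (k : Fin 4) :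
    meanOf k I E x lam ∈ I ∧ eFun E x lam (meanOf k I E x lam) = 0 ∧
    (∀ c, (∀ i, lam i ≠ 0 → x i ≤ c) → meanOf k I E x lam ≤ c) ∧
    (∀ c, (∀ i, lam i ≠ 0 → c ≤ x i) → c ≤ meanOf k I E x lam) := by
  obtain ⟨hsd, hcont, hderiv, hdneg, hdcont⟩ := hE
  obtain ⟨j0, hj0⟩ := weight_support hw
  set T : Finset (Fin n) := Finset.univ.filter (fun i => lam i ≠ 0) with hT
  have hTne : T.Nonempty := ⟨j0, by simp [hT, hj0]⟩
  set m : ℝ := T.inf' hTne x with hm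
  set M : ℝ := T.sup' hTne x with hM
  have hmem : ∀ i, lam i ≠ 0 → i ∈ T := fun i hi => by simp [hT, hi]
  have hm_le : ∀ i, lam i ≠ 0 → m ≤ x i := fun i hi => Finset.inf'_le x (hmem i hi)
  have hM_ge : ∀ i, lam i ≠ 0 → x i ≤ M := fun i hi => Finset.le_sup' x (hmem i hi)
  obtain ⟨im, himT, him⟩ := Finset.exists_mem_eq_inf' hTne x
  obtain ⟨iM, hiMT, hiM⟩ := Finset.exists_mem_eq_sup' hTne x
  have him0 : lam im ≠ 0 := by simpa [hT] using (Finset.mem_filter.mp himT).2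
  have hmI : m ∈ I := by rw [hm, him]; exact hx im
  have hMI : M ∈ I := by rw [hM, hiM]; exact hx iM
  have hmM : m ≤ M := by
    have := hM_ge im him0
    rw [hm, him]; exact this
  have hIccI : Icc m M ⊆ I := hI.out hmI hMI
  set e : ℝ → ℝ := eFun E x lam with he
  have econt : ContinuousOn e I := eFun_continuousOn hcont lam hx
  have epos : ∀ y ∈ I, y < m → 0 < e y := fun y hy h =>
    eFun_pos hsd hx hw hy (fun i hi => lt_of_lt_of_le h (hm_le i hi))
  have eneg : ∀ y ∈ I, M < y → e y < 0 := fun y hy h =>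
    eFun_neg hsd hx hw hy (fun i hi => lt_of_le_of_lt (hM_ge i hi) h)
  have enn : 0 ≤ e m := eFun_nonneg hIo hsd hcont hx hw hmI hm_le
  have enp : e M ≤ 0 := eFun_nonpos hIo hsd hcont hx hw hMI hM_ge
  have hconc : ∀ μ, μ ∈ Icc m M → e μ = 0 →
      (μ ∈ I ∧ e μ = 0 ∧ (∀ c, (∀ i, lam i ≠ 0 → x i ≤ c) → μ ≤ c) ∧
        (∀ c, (∀ i, lam i ≠ 0 → c ≤ x i) → c ≤ μ)) := by
    intro μ hμ hμ0
    refine ⟨hIccI hμ, hμ0, fun c hc => le_trans hμ.2 (Finset.sup'_le hTne x fun i hi =>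
      hc i (by simpa [hT] using (Finset.mem_filter.mp hi).2)), fun c hc =>
      le_trans (Finset.le_inf' hTne x fun i hi =>
      hc i (by simpa [hT] using (Finset.mem_filter.mp hi).2)) hμ.1⟩
  fin_cases k <;> simp only [meanOf, reduceIte, Fin.isValue] <;>
    [skip; skip; skip; skip]
  -- case LLD
  case _ =>
    set S : Set ℝ := {y | y ∈ I ∧ e y ≤ 0} with hS
    have hMS : M ∈ S := ⟨hMI, enp⟩
    have hSne : S.Nonempty := ⟨M, hMS⟩
    have hlb : ∀ y ∈ S, m ≤ y := by
      intro y hy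
      by_contra h
      exact absurd hy.2 (not_le.mpr (epos y hy.1 (not_le.mp h)))
    have hbdd : BddBelow S := ⟨m, hlb⟩
    have hμIcc : sInf S ∈ Icc m M := ⟨le_csInf hSne hlb, csInf_le hbdd hMS⟩
    have hμI : sInf S ∈ I := hIccI hμIcc
    have hca : ContinuousAt e (sInf S) := econt.continuousAt (hIo.mem_nhds hμI)
    have hle : e (sInf S) ≤ 0 :=
      cont_le_closure hca (csInf_mem_closure hSne hbdd) (fun y hy => hy.2)
    have hge : 0 ≤ e (sInf S) := by
      refine cont_nonneg_left hca (hIo.mem_nhds hμI) (fun y hyI hy => ?_)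
      by_contra h
      exact absurd (csInf_le hbdd ⟨hyI, le_of_lt (not_le.mp h)⟩) (not_le.mpr hy)
    exact hconc _ hμIcc (le_antisymm hle hge)
  -- case LD
  case _ =>
    set S : Set ℝ := {y | y ∈ I ∧ e y < 0} with hS
    have hSne : S.Nonempty := by
      obtain ⟨y, hyI, hy1, _⟩ := exists_right hIo hMI one_pos
      exact ⟨y, hyI, eneg y hyI hy1⟩
    have hlb : ∀ y ∈ S, m ≤ y := by
      intro y hy
      by_contra h
      exact absurd hy.2 (not_lt.mpr (le_of_lt (epos y hy.1 (not_le.mp h))))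
    have hbdd : BddBelow S := ⟨m, hlb⟩
    have hμM : sInf S ≤ M := by
      refine le_of_forall_pos_le_add (fun ε hε => ?_)
      obtain ⟨y, hyI, hy1, hy2⟩ := exists_right hIo hMI hε
      exact le_trans (csInf_le hbdd ⟨hyI, eneg y hyI hy1⟩) (le_of_lt hy2)
    have hμIcc : sInf S ∈ Icc m M := ⟨le_csInf hSne hlb, hμM⟩
    have hμI : sInf S ∈ I := hIccI hμIcc
    have hca : ContinuousAt e (sInf S) := econt.continuousAt (hIo.mem_nhds hμI)
    have hle : e (sInf S) ≤ 0 :=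
      cont_le_closure hca (csInf_mem_closure hSne hbdd) (fun y hy => le_of_lt hy.2)
    have hge : 0 ≤ e (sInf S) := by
      refine cont_nonneg_left hca (hIo.mem_nhds hμI) (fun y hyI hy => ?_)
      by_contra h
      exact absurd (csInf_le hbdd ⟨hyI, not_le.mp h⟩) (not_le.mpr hy)
    exact hconc _ hμIcc (le_antisymm hle hge)
  -- case UD
  case _ =>
    set S : Set ℝ := {y | y ∈ I ∧ 0 < e y} with hS
    have hSne : S.Nonempty := by
      obtain ⟨y, hyI, hy1, _⟩ := exists_left hIo hmI one_pos
      exact ⟨y, hyI, epos y hyI hy1⟩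
    have hub : ∀ y ∈ S, y ≤ M := by
      intro y hy
      by_contra h
      exact absurd hy.2 (not_lt.mpr (le_of_lt (eneg y hy.1 (not_le.mp h))))
    have hbdd : BddAbove S := ⟨M, hub⟩
    have hμm : m ≤ sSup S := by
      refine le_of_forall_pos_le_add (fun ε hε => ?_)
      obtain ⟨y, hyI, hy1, hy2⟩ := exists_left hIo hmI hε
      have : y ≤ sSup S := le_csSup hbdd ⟨hyI, epos y hyI hy1⟩
      linarith
    have hμIcc : sSup S ∈ Icc m M := ⟨hμm, csSup_le hSne hub⟩
    have hμI : sSup S ∈ I := hIccI hμIcc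
    have hca : ContinuousAt e (sSup S) := econt.continuousAt (hIo.mem_nhds hμI)
    have hge : 0 ≤ e (sSup S) :=
      cont_ge_closure hca (csSup_mem_closure hSne hbdd) (fun y hy => le_of_lt hy.2)
    have hle : e (sSup S) ≤ 0 := by
      refine cont_nonpos_right hca (hIo.mem_nhds hμI) (fun y hyI hy => ?_)
      by_contra h
      exact absurd (le_csSup hbdd ⟨hyI, not_le.mp h⟩) (not_le.mpr hy)
    exact hconc _ hμIcc (le_antisymm hle hge)
  -- case UUD
  case _ =>
    set S : Set ℝ := {y | y ∈ I ∧ 0 ≤ e y} with hS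
    have hmS : m ∈ S := ⟨hmI, enn⟩
    have hSne : S.Nonempty := ⟨m, hmS⟩
    have hub : ∀ y ∈ S, y ≤ M := by
      intro y hy
      by_contra h
      exact absurd hy.2 (not_le.mpr (eneg y hy.1 (not_le.mp h)))
    have hbdd : BddAbove S := ⟨M, hub⟩
    have hμIcc : sSup S ∈ Icc m M := ⟨le_csSup hbdd hmS, csSup_le hSne hub⟩
    have hμI : sSup S ∈ I := hIccI hμIcc
    have hca : ContinuousAt e (sSup S) := econt.continuousAt (hIo.mem_nhds hμI)
    have hge : 0 ≤ e (sSup S) :=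
      cont_ge_closure hca (csSup_mem_closure hSne hbdd) (fun y hy => hy.2)
    have hle : e (sSup S) ≤ 0 := by
      refine cont_nonpos_right hca (hIo.mem_nhds hμI) (fun y hyI hy => ?_)
      by_contra h
      exact absurd (le_csSup hbdd ⟨hyI, le_of_lt (not_le.mp h)⟩) (not_le.mpr hy)
    exact hconc _ hμIcc (le_antisymm hle hge)
lemma LLD_le {I : Set ℝ} {E : ℝ → ℝ → ℝ} (hsd : IsSemideviation I E)
    {n : ℕ} {x lam : Fin n → ℝ} (hx : ∀ i, x i ∈ I) (hw : IsWeight lam)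
    {c : ℝ} (hcI : c ∈ I) (hc : eFun E x lam c ≤ 0) : LLD I E x lam ≤ c := by
  obtain ⟨j0, hj0⟩ := weight_support hw
  set T : Finset (Fin n) := Finset.univ.filter (fun i => lam i ≠ 0) with hT
  have hTne : T.Nonempty := ⟨j0, by simp [hT, hj0]⟩
  set m : ℝ := T.inf' hTne x with hm
  have hm_le : ∀ i, lam i ≠ 0 → m ≤ x i := fun i hi =>
    Finset.inf'_le x (by simp [hT, hi])
  have hbdd : BddBelow {y : ℝ | y ∈ I ∧ eFun E x lam y ≤ 0} := by
    refine ⟨m, fun y hy => ?_⟩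
    by_contra h
    exact absurd hy.2 (not_le.mpr (eFun_pos hsd hx hw hy.1
      (fun i hi => lt_of_lt_of_le (not_le.mp h) (hm_le i hi))))
  exact csInf_le hbdd ⟨hcI, hc⟩
lemma fwd_dir {I J K : Set ℝ}
    (hI : I.OrdConnected) (hIo : IsOpen I)
    (hJ : J.OrdConnected) (hJo : IsOpen J)
    (hK : K.OrdConnected) (hKo : IsOpen K)
    {E F G : ℝ → ℝ → ℝ} {dE dF dG : ℝ → ℝ}
    (hE : IsNormalizable I E dE) (hF : IsNormalizable J F dF)
    (hG : IsNormalizable K G dG)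
    {f f₁ f₂ : ℝ → ℝ → ℝ}
    (hmap : ∀ u ∈ J, ∀ v ∈ K, f u v ∈ I)
    (h3 : ∀ p ∈ J, ∀ u ∈ J, ∀ q ∈ K, ∀ v ∈ K,
        nrm E dE (f p q) (f u v)
          ≤ f₁ u v * nrm F dF p u + f₂ u v * nrm G dG q v) :
    ∀ k l : Fin 4, ∀ (n : ℕ) (x y lam : Fin n → ℝ),
        (∀ i, x i ∈ J) → (∀ i, y i ∈ K) → IsWeight lam →
        LLD I E (fun i => f (x i) (y i)) lam
          ≤ f (meanOf k J F x lam) (meanOf l K G y lam) := by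
  intro k l n x y lam hx hy hw
  obtain ⟨huJ, heF, -, -⟩ := mean_props hJ hJo hF hx hw k
  obtain ⟨hvK, heG, -, -⟩ := mean_props hK hKo hG hy hw l
  set u : ℝ := meanOf k J F x lam
  set v : ℝ := meanOf l K G y lam
  set c : ℝ := f u v with hc
  have hcI : c ∈ I := hmap u huJ v hvK
  set w : Fin n → ℝ := fun i => f (x i) (y i) with hwdef
  have hwI : ∀ i, w i ∈ I := fun i => hmap _ (hx i) _ (hy i)
  have hdEc : 0 < -(dE c) := by linarith [hE.2.2.2.1 c hcI]
  have sum_le : ∑ i, lam i * nrm E dE (w i) c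
      ≤ ∑ i, lam i * (f₁ u v * nrm F dF (x i) u + f₂ u v * nrm G dG (y i) v) :=
    Finset.sum_le_sum (fun i _ =>
      mul_le_mul_of_nonneg_left (h3 _ (hx i) u huJ _ (hy i) v hvK) (hw.1 i))
  have hLHS : ∑ i, lam i * nrm E dE (w i) c = eFun E w lam c / (-(dE c)) := by
    simp only [nrm, eFun, Finset.sum_div]
    exact Finset.sum_congr rfl (fun i _ => by ring)
  have hRHS : ∑ i, lam i * (f₁ u v * nrm F dF (x i) u + f₂ u v * nrm G dG (y i) v)
      = f₁ u v / (-(dF u)) * eFun F x lam u + f₂ u v / (-(dG v)) * eFun G y lam v := by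
    simp only [nrm, eFun, Finset.mul_sum]
    rw [← Finset.sum_add_distrib]
    exact Finset.sum_congr rfl (fun i _ => by ring)
  rw [hLHS, hRHS, heF, heG] at sum_le
  simp only [mul_zero, add_zero] at sum_le
  have hefc : eFun E w lam c ≤ 0 := by
    by_contra h
    exact absurd sum_le (not_le.mpr (div_pos (not_le.mp h) hdEc))
  exact LLD_le hE.1 hwI hw hcI hefc
lemma mean_limit {I : Set ℝ} {E : ℝ → ℝ → ℝ} {dE : ℝ → ℝ}
    (hI : I.OrdConnected) (hIo : IsOpen I) (hE : IsNormalizable I E dE)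
    {a b : ℝ} (ha : a ∈ I) (hb : b ∈ I) (k : Fin 4) :
    Tendsto (fun t => meanOf k I E ![a, b] ![t, 1 - t]) (𝓝[Ioo (0:ℝ) 1] 0) (𝓝 b) ∧
    Tendsto (fun t => (meanOf k I E ![a, b] ![t, 1 - t] - b) / t) (𝓝[Ioo (0:ℝ) 1] 0)
      (𝓝 (nrm E dE a b)) := by
  set L : Filter ℝ := 𝓝[Ioo (0:ℝ) 1] 0 with hL
  set Φ : ℝ → ℝ := fun t => meanOf k I E ![a, b] ![t, 1 - t] with hΦ
  have hxmem : ∀ i : Fin 2, ![a, b] i ∈ I := by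
    intro i; fin_cases i <;> simpa
  have hkey : ∀ t ∈ Ioo (0:ℝ) 1, Φ t ∈ I ∧ min a b ≤ Φ t ∧ Φ t ≤ max a b ∧
      t * E a (Φ t) + (1 - t) * E b (Φ t) = 0 := by
    intro t ht
    have hwt : IsWeight ![t, 1 - t] := by
      constructor
      · intro i; fin_cases i <;> simp <;> [exact le_of_lt ht.1; linarith [ht.2]]
      · simp [Fin.sum_univ_two]
    obtain ⟨h1, h2, h3, h4⟩ := mean_props hI hIo hE hxmem hwt k
    refine ⟨h1, h4 _ ?_, h3 _ ?_, ?_⟩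
    · intro i _; fin_cases i <;> simp [min_le_left, min_le_right]
    · intro i _; fin_cases i <;> simp [le_max_left, le_max_right]
    · have := h2
      simpa [eFun, Fin.sum_univ_two] using this
  rcases eq_or_ne a b with hab | hab
  · -- degenerate case a = b
    subst hab
    have hconst : ∀ᶠ t in L, Φ t = a := by
      filter_upwards [eventually_mem_nhdsWithin] with t ht
      obtain ⟨-, h2, h3, -⟩ := hkey t ht
      rw [min_self] at h2; rw [max_self] at h3
      linarith
    have hnrm : nrm E dE a a = 0 := by
      simp [nrm, sd_diag hIo hE.1 hE.2.1 ha]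
    constructor
    · exact Tendsto.congr' (by filter_upwards [hconst] with t h using h.symm)
        tendsto_const_nhds
    · rw [hnrm]
      refine Tendsto.congr' ?_ tendsto_const_nhds
      filter_upwards [hconst] with t h
      show 0 = (Φ t - a) / t
      rw [h]
      simp
  · -- main case a ≠ b
    obtain ⟨hsd, hcont, hderiv, hdneg, hdcont⟩ := hE
    have hEb0 : E b b = 0 := sd_diag hIo hsd hcont hb
    have hminI : min a b ∈ I := by rcases min_choice a b with h | h <;> rw [h] <;> assumption
    have hmaxI : max a b ∈ I := by rcases max_choice a b with h | h <;> rw [h] <;> assumption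
    have hKcI : Icc (min a b) (max a b) ⊆ I := hI.out hminI hmaxI
    have hKcne : (Icc (min a b) (max a b)).Nonempty :=
      ⟨b, min_le_right a b, le_max_right a b⟩
    obtain ⟨z0, hz0, hz0max⟩ := isCompact_Icc.exists_isMaxOn hKcne
      (continuous_abs.comp_continuousOn ((hcont a ha).mono hKcI))
    set C := |E a z0| with hC
    have hCb : ∀ z ∈ Icc (min a b) (max a b), |E a z| ≤ C := fun z hz => hz0max hz
    have hC0 : 0 ≤ C := abs_nonneg _
    have hΦmem : ∀ᶠ t in L, t ∈ Ioo (0:ℝ) 1 := eventually_mem_nhdsWithin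
    have hΦne : ∀ t ∈ Ioo (0:ℝ) 1, Φ t ≠ b := by
      intro t ht hc
      have h4 := (hkey t ht).2.2.2
      rw [hc, hEb0, mul_zero, add_zero, mul_eq_zero] at h4
      rcases h4 with h | h
      · exact (ne_of_gt ht.1) h
      · exact sd_ne hsd ha hb hab h
    have hEbΦ : Tendsto (fun t => E b (Φ t)) L (𝓝 0) := by
      rw [tendsto_zero_iff_abs_tendsto_zero]
      have hg : Tendsto (fun t : ℝ => 2 * C * t) L (𝓝 0) := by
        have : Tendsto (fun t : ℝ => 2 * C * t) (𝓝 0) (𝓝 (2 * C * 0)) :=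
          (continuous_const.mul continuous_id).tendsto 0
        simpa using this.mono_left nhdsWithin_le_nhds
      refine squeeze_zero' (Eventually.of_forall fun t => abs_nonneg _) ?_ hg
      have hhalf : ∀ᶠ t in L, t < 1/2 :=
        (eventually_lt_nhds (by norm_num : (0:ℝ) < 1/2)).filter_mono nhdsWithin_le_nhds
      filter_upwards [hΦmem, hhalf] with t ht ht2
      obtain ⟨hΦI, hlo, hhi, h4⟩ := hkey t ht
      have habs : (1 - t) * |E b (Φ t)| = t * |E a (Φ t)| := by
        have : (1 - t) * E b (Φ t) = -(t * E a (Φ t)) := by linarith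
        calc (1 - t) * |E b (Φ t)| = |(1 - t) * E b (Φ t)| := by
              rw [abs_mul, abs_of_nonneg (by linarith [ht.2] : (0:ℝ) ≤ 1 - t)]
          _ = |t * E a (Φ t)| := by rw [this, abs_neg]
          _ = t * |E a (Φ t)| := by rw [abs_mul, abs_of_nonneg (le_of_lt ht.1)]
      have hEa := hCb (Φ t) ⟨hlo, hhi⟩
      show |E b (Φ t)| ≤ 2 * C * t
      nlinarith [mul_nonneg (le_of_lt ht.1) (sub_nonneg.mpr hEa),
        mul_nonneg (abs_nonneg (E b (Φ t))) (by linarith : (0:ℝ) ≤ 1/2 - t)]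
    have hΦtendsto : Tendsto Φ L (𝓝 b) := by
      rw [Metric.tendsto_nhds]
      intro ε hε
      have hclosed : IsClosed {z : ℝ | ε ≤ |z - b|} :=
        isClosed_le continuous_const ((continuous_id.sub continuous_const).abs)
      obtain ⟨δ, hδ, hδprop⟩ : ∃ δ > 0, ∀ z ∈ Icc (min a b) (max a b),
          |E b z| < δ → |z - b| < ε := by
        by_cases hne : (Icc (min a b) (max a b) ∩ {z : ℝ | ε ≤ |z - b|}).Nonempty
        · obtain ⟨z1, hz1, hz1min⟩ := (isCompact_Icc.inter_right hclosed).exists_isMinOn hne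
            (continuous_abs.comp_continuousOn
              ((hcont b hb).mono (inter_subset_left.trans hKcI)))
          have hz1b : b ≠ z1 := by
            intro hcon
            have := hz1.2
            rw [← hcon] at this
            simp at this
            linarith [this, hε]
          refine ⟨|E b z1|, abs_pos.mpr (sd_ne hsd hb (hKcI hz1.1) hz1b), ?_⟩
          intro z hz hlt
          by_contra hcontra
          push_neg at hcontra
          exact absurd (hz1min ⟨hz, hcontra⟩) (not_le.mpr hlt)
        · refine ⟨1, one_pos, fun z hz _ => ?_⟩
          by_contra hcontra
          push_neg at hcontra
          exact hne ⟨z, hz, hcontra⟩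
      have hh := (Metric.tendsto_nhds.mp hEbΦ) δ hδ
      filter_upwards [hh, hΦmem] with t h1 h2
      rw [Real.dist_eq]
      obtain ⟨-, hlo, hhi, -⟩ := hkey t h2
      refine hδprop _ ⟨hlo, hhi⟩ ?_
      rw [Real.dist_eq, sub_zero] at h1
      exact h1
    refine ⟨hΦtendsto, ?_⟩
    have hder : HasDerivAt (fun y => E b y) (dE b) b :=
      (hderiv b hb).hasDerivAt (hIo.mem_nhds hb)
    have hslope : Tendsto (slope (fun y => E b y) b) (𝓝[≠] b) (𝓝 (dE b)) :=
      hasDerivAt_iff_tendsto_slope.mp hder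
    have hΦslope : Tendsto (fun t => slope (fun y => E b y) b (Φ t)) L (𝓝 (dE b)) := by
      refine hslope.comp (tendsto_nhdsWithin_iff.mpr ⟨hΦtendsto, ?_⟩)
      filter_upwards [hΦmem] with t ht
      exact hΦne t ht
    have hslope_eq : ∀ z : ℝ, slope (fun y => E b y) b z = E b z / (z - b) := by
      intro z
      simp [slope, hEb0, div_eq_inv_mul]
    have hEaΦ : Tendsto (fun t => E a (Φ t)) L (𝓝 (E a b)) :=
      (((hcont a ha).continuousAt (hIo.mem_nhds hb)).tendsto).comp hΦtendsto
    have h1t : Tendsto (fun t : ℝ => 1 - t) L (𝓝 1) := by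
      have : Tendsto (fun t : ℝ => 1 - t) (𝓝 0) (𝓝 (1 - 0)) :=
        (continuous_const.sub continuous_id).tendsto 0
      simpa using this.mono_left nhdsWithin_le_nhds
    have hdne : (1:ℝ) * dE b ≠ 0 := by
      rw [one_mul]; exact ne_of_lt (hdneg b hb)
    have hlim2 : Tendsto
        (fun t => -(E a (Φ t)) / ((1 - t) * slope (fun y => E b y) b (Φ t))) L
        (𝓝 (-(E a b) / (1 * dE b))) :=
      Tendsto.div hEaΦ.neg (h1t.mul hΦslope) hdne
    have heq : ∀ᶠ t in L, -(E a (Φ t)) / ((1 - t) * slope (fun y => E b y) b (Φ t))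
        = (Φ t - b) / t := by
      filter_upwards [hΦmem] with t ht
      obtain ⟨hΦI, -, -, h4⟩ := hkey t ht
      have hsub : Φ t - b ≠ 0 := sub_ne_zero.mpr (hΦne t ht)
      have hEbΦne : E b (Φ t) ≠ 0 := sd_ne hsd hb hΦI (Ne.symm (hΦne t ht))
      have ht0 : t ≠ 0 := ne_of_gt ht.1
      have ht1 : (1:ℝ) - t ≠ 0 := by
        have := ht.2; intro hcon; linarith [sub_eq_zero.mp hcon]
      rw [hslope_eq]
      field_simp
      linear_combination (-1 : ℝ) * h4
    have hfin : -(E a b) / (1 * dE b) = nrm E dE a b := by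
      rw [nrm, one_mul, div_neg, neg_div]
    rw [← hfin]
    exact hlim2.congr' heq
lemma path_deriv {f f₁ f₂ : ℝ → ℝ → ℝ} {u v A B : ℝ}
    (hdf : HasFDerivAt (fun p : ℝ × ℝ => f p.1 p.2)
      ((f₁ u v) • ContinuousLinearMap.fst ℝ ℝ ℝ
        + (f₂ u v) • ContinuousLinearMap.snd ℝ ℝ ℝ) (u, v))
    {μ ν : ℝ → ℝ}
    (hμ : Tendsto μ (𝓝[Ioo (0:ℝ) 1] 0) (𝓝 u)) (hν : Tendsto ν (𝓝[Ioo (0:ℝ) 1] 0) (𝓝 v))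
    (hA : Tendsto (fun t => (μ t - u)/t) (𝓝[Ioo (0:ℝ) 1] 0) (𝓝 A))
    (hB : Tendsto (fun t => (ν t - v)/t) (𝓝[Ioo (0:ℝ) 1] 0) (𝓝 B)) :
    Tendsto (fun t => (f (μ t) (ν t) - f u v)/t) (𝓝[Ioo (0:ℝ) 1] 0)
      (𝓝 (f₁ u v * A + f₂ u v * B)) := by
  set L : Filter ℝ := 𝓝[Ioo (0:ℝ) 1] 0 with hL
  have hne0 : ∀ᶠ t in L, t ≠ 0 := by
    filter_upwards [eventually_mem_nhdsWithin] with t ht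
    exact ne_of_gt ht.1
  have hO : ∀ {g : ℝ → ℝ} {c cA : ℝ}, Tendsto (fun t => (g t - c)/t) L (𝓝 cA) →
      ∀ᶠ t in L, |g t - c| ≤ (|cA| + 1) * |t| := by
    intro g c cA hg
    have h1 : ∀ᶠ t in L, |(g t - c)/t - cA| < 1 := by
      have := Metric.tendsto_nhds.mp hg 1 one_pos
      simpa [Real.dist_eq] using this
    filter_upwards [h1, hne0] with t h1t h2t
    have hr : |(g t - c)/t| ≤ |cA| + 1 := by
      calc |(g t - c)/t| ≤ |(g t - c)/t - cA| + |cA| := by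
            have := abs_sub_abs_le_abs_sub ((g t - c)/t) cA
            linarith [abs_nonneg ((g t - c)/t - cA)]
        _ ≤ |cA| + 1 := by linarith
    calc |g t - c| = |(g t - c)/t| * |t| := by
          rw [abs_div, div_mul_cancel₀ _ (abs_ne_zero.mpr h2t)]
      _ ≤ (|cA| + 1) * |t| := mul_le_mul_of_nonneg_right hr (abs_nonneg t)
  set f' : ℝ × ℝ →L[ℝ] ℝ := (f₁ u v) • ContinuousLinearMap.fst ℝ ℝ ℝ
      + (f₂ u v) • ContinuousLinearMap.snd ℝ ℝ ℝ with hf'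
  have happ : ∀ p : ℝ × ℝ, f' p = f₁ u v * p.1 + f₂ u v * p.2 := by
    intro p
    simp [hf', ContinuousLinearMap.add_apply, ContinuousLinearMap.smul_apply]
  have hφ : Tendsto (fun t => (μ t, ν t)) L (𝓝 (u, v)) := hμ.prodMk_nhds hν
  have hlo : (fun p : ℝ × ℝ => f p.1 p.2 - f u v - f' (p - (u, v))) =o[𝓝 (u, v)]
      (fun p : ℝ × ℝ => p - (u, v)) := hasFDerivAt_iff_isLittleO.mp hdf
  have hcomp : (fun t => f (μ t) (ν t) - f u v - f' ((μ t, ν t) - (u, v))) =o[L]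
      (fun t => (μ t, ν t) - (u, v)) := hlo.comp_tendsto hφ
  have hOφ : (fun t => (μ t, ν t) - (u, v)) =O[L] (fun t => t) := by
    rw [Asymptotics.isBigO_iff]
    refine ⟨max (|A| + 1) (|B| + 1), ?_⟩
    filter_upwards [hO hA, hO hB] with t h1 h2
    rw [Real.norm_eq_abs]
    rw [Prod.norm_def]
    simp only [Prod.fst_sub, Prod.snd_sub, Real.norm_eq_abs]
    refine max_le ?_ ?_
    · exact h1.trans (mul_le_mul_of_nonneg_right (le_max_left _ _) (abs_nonneg t))
    · exact h2.trans (mul_le_mul_of_nonneg_right (le_max_right _ _) (abs_nonneg t))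
  have hsmall : (fun t => f (μ t) (ν t) - f u v - f' ((μ t, ν t) - (u, v))) =o[L]
      (fun t => t) := hcomp.trans_isBigO hOφ
  have htend0 : Tendsto
      (fun t => (f (μ t) (ν t) - f u v - f' ((μ t, ν t) - (u, v))) / t) L (𝓝 0) := by
    refine (Asymptotics.isLittleO_iff_tendsto' ?_).mp hsmall
    filter_upwards [hne0] with t ht hcon
    exact absurd hcon ht
  have hmain : Tendsto (fun t =>
      (f (μ t) (ν t) - f u v - f' ((μ t, ν t) - (u, v))) / t
        + (f₁ u v * ((μ t - u)/t) + f₂ u v * ((ν t - v)/t))) L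
      (𝓝 (0 + (f₁ u v * A + f₂ u v * B))) :=
    htend0.add ((hA.const_mul _).add (hB.const_mul _))
  rw [zero_add] at hmain
  refine hmain.congr' ?_
  filter_upwards [hne0] with t ht
  rw [happ]
  simp only [Prod.fst_sub, Prod.snd_sub]
  field_simp
  ring
lemma bwd_dir {I J K : Set ℝ}
    (hI : I.OrdConnected) (hIo : IsOpen I)
    (hJ : J.OrdConnected) (hJo : IsOpen J)
    (hK : K.OrdConnected) (hKo : IsOpen K)
    {E F G : ℝ → ℝ → ℝ} {dE dF dG : ℝ → ℝ}
    (hE : IsNormalizable I E dE) (hF : IsNormalizable J F dF)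
    (hG : IsNormalizable K G dG)
    {f f₁ f₂ : ℝ → ℝ → ℝ}
    (hmap : ∀ u ∈ J, ∀ v ∈ K, f u v ∈ I)
    (hdf : ∀ u ∈ J, ∀ v ∈ K, HasFDerivAt (fun p : ℝ × ℝ => f p.1 p.2)
      ((f₁ u v) • ContinuousLinearMap.fst ℝ ℝ ℝ
        + (f₂ u v) • ContinuousLinearMap.snd ℝ ℝ ℝ) (u, v))
    (k l : Fin 4)
    (hP : ∀ (n : ℕ) (x y lam : Fin n → ℝ),
        (∀ i, x i ∈ J) → (∀ i, y i ∈ K) → IsWeight lam →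
        LLD I E (fun i => f (x i) (y i)) lam
          ≤ f (meanOf k J F x lam) (meanOf l K G y lam)) :
    ∀ p ∈ J, ∀ u ∈ J, ∀ q ∈ K, ∀ v ∈ K,
        nrm E dE (f p q) (f u v)
          ≤ f₁ u v * nrm F dF p u + f₂ u v * nrm G dG q v := by
  intro p hp u hu q hq v hv
  haveI hNB : (𝓝[Ioo (0:ℝ) 1] 0).NeBot := by
    apply mem_closure_iff_nhdsWithin_neBot.mp
    rw [closure_Ioo (zero_ne_one)]
    exact ⟨le_refl 0, zero_le_one⟩
  obtain ⟨hμt, hμr⟩ := mean_limit hJ hJo hF hp hu k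
  obtain ⟨hνt, hνr⟩ := mean_limit hK hKo hG hq hv l
  obtain ⟨hζt, hζr⟩ := mean_limit hI hIo hE (hmap p hp q hq) (hmap u hu v hv) (0 : Fin 4)
  have hRHS := path_deriv (hdf u hu v hv) hμt hνt hμr hνr
  have hineq : ∀ᶠ t in 𝓝[Ioo (0:ℝ) 1] 0,
      (meanOf 0 I E ![f p q, f u v] ![t, 1-t] - f u v)/t
        ≤ (f (meanOf k J F ![p, u] ![t, 1-t]) (meanOf l K G ![q, v] ![t, 1-t]) - f u v)/t := by
    filter_upwards [eventually_mem_nhdsWithin] with t ht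
    have hwt : IsWeight ![t, 1 - t] := by
      constructor
      · intro i; fin_cases i <;> simp <;> [exact le_of_lt ht.1; linarith [ht.2]]
      · simp [Fin.sum_univ_two]
    have h := hP 2 ![p, u] ![q, v] ![t, 1-t]
      (by intro i; fin_cases i <;> simpa) (by intro i; fin_cases i <;> simpa) hwt
    have hfx : (fun i => f (![p, u] i) (![q, v] i)) = ![f p q, f u v] := by
      funext i; fin_cases i <;> simp
    rw [hfx] at h
    have hLLD : meanOf 0 I E ![f p q, f u v] ![t, 1-t] = LLD I E ![f p q, f u v] ![t, 1-t] := by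
      simp [meanOf]
    rw [hLLD]
    exact (div_le_div_iff_of_pos_right ht.1).mpr (by linarith)
  exact le_of_tendsto_of_tendsto hζr hRHS hineq
theorem statement13 (I J K : Set ℝ)
    (hI : I.OrdConnected) (hIo : IsOpen I)
    (hJ : J.OrdConnected) (hJo : IsOpen J)
    (hK : K.OrdConnected) (hKo : IsOpen K)
    (E F G : ℝ → ℝ → ℝ) (dE dF dG : ℝ → ℝ)
    (hE : IsNormalizable I E dE) (hF : IsNormalizable J F dF)
    (hG : IsNormalizable K G dG)
    (f f₁ f₂ : ℝ → ℝ → ℝ)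
    (hmap : ∀ u ∈ J, ∀ v ∈ K, f u v ∈ I)
    (hdf : ∀ u ∈ J, ∀ v ∈ K, HasFDerivAt (fun p : ℝ × ℝ => f p.1 p.2)
      ((f₁ u v) • ContinuousLinearMap.fst ℝ ℝ ℝ
        + (f₂ u v) • ContinuousLinearMap.snd ℝ ℝ ℝ) (u, v)) :
    ((∀ k l : Fin 4, ∀ (n : ℕ) (x y lam : Fin n → ℝ),
        (∀ i, x i ∈ J) → (∀ i, y i ∈ K) → IsWeight lam →
        LLD I E (fun i => f (x i) (y i)) lam
          ≤ f (meanOf k J F x lam) (meanOf l K G y lam)) ↔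
     (∃ k l : Fin 4, ∀ (n : ℕ) (x y lam : Fin n → ℝ),
        (∀ i, x i ∈ J) → (∀ i, y i ∈ K) → IsWeight lam →
        LLD I E (fun i => f (x i) (y i)) lam
          ≤ f (meanOf k J F x lam) (meanOf l K G y lam))) ∧
    ((∃ k l : Fin 4, ∀ (n : ℕ) (x y lam : Fin n → ℝ),
        (∀ i, x i ∈ J) → (∀ i, y i ∈ K) → IsWeight lam →
        LLD I E (fun i => f (x i) (y i)) lam
          ≤ f (meanOf k J F x lam) (meanOf l K G y lam)) ↔
     (∀ p ∈ J, ∀ u ∈ J, ∀ q ∈ K, ∀ v ∈ K,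
        nrm E dE (f p q) (f u v)
          ≤ f₁ u v * nrm F dF p u + f₂ u v * nrm G dG q v)) := by
  constructor
  · constructor
    · intro h
      exact ⟨0, 0, h 0 0⟩
    · rintro ⟨k, l, hkl⟩ k' l'
      exact fwd_dir hI hIo hJ hJo hK hKo hE hF hG hmap
        (bwd_dir hI hIo hJ hJo hK hKo hE hF hG hmap hdf k l hkl) k' l'
  · constructor
    · rintro ⟨k, l, hkl⟩
      exact bwd_dir hI hIo hJ hJo hK hKo hE hF hG hmap hdf k l hkl
    · intro h3
      exact ⟨0, 0, fwd_dir hI hIo hJ hJo hK hKo hE hF hG hmap h3 0 0⟩
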